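/- arXiv:2008.01327 — 2 statements merged into one kernel-verified Lean document; each statement's English description precedes it below -/
import Mathlib

section
/- Let n ≥ 1, and for i, j ∈ {1, …, 2^n} say i dominates j if odd(j − i) ≡ 1 (mod 4). Then every i ∈ {1, …, 2^(n−1)} dominates exactly 2^(n−1) elements of {1, …, 2^n} and is dominated by exactly 2^(n−1) − 1 elements, and every i ∈ {2^(n−1)+1, …, 2^n} dominates exactly 2^(n−1) − 1 elements and is dominated by exactly 2^(n−1) elements. -/
open scoped Classical

/-- For a nonzero integer `z`, `oddPart z` is `z` divided by the largest power of 2 dividing `z`. -/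
def oddPart (z : ℤ) : ℤ := z / 2 ^ (z.natAbs.factorization 2)

/-- `i` dominates `j` iff `odd (j - i) ≡ 1 (mod 4)`. -/
def Dominates (i j : ℤ) : Prop := oddPart (j - i) ≡ 1 [ZMOD 4]

lemma oddPart_pow_mul (m:ℤ) (hm : Odd m) (k : ℕ) : oddPart (2^k * m) = m := by
  have h0 : m ≠ 0 := by rintro rfl; simp at hm
  have hd : ¬ (2 ∣ m.natAbs) := by
    have := Int.natAbs_odd.mpr hm
    rw [Nat.odd_iff] at this; omega
  have h : ((2:ℤ)^k * m).natAbs.factorization 2 = k := by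
    rw [Int.natAbs_mul, Nat.factorization_mul (by positivity) (by simpa using h0), Int.natAbs_pow]
    simp [Nat.Prime.factorization_pow, Nat.factorization_eq_zero_of_not_dvd hd,
      Nat.Prime.factorization (p := 2) (by norm_num)]
  rw [oddPart, h, Int.mul_ediv_cancel_left _ (by positivity)]

lemma exists_rep (z : ℤ) (hz : z ≠ 0) : ∃ k : ℕ, ∃ m : ℤ, Odd m ∧ z = 2^k * m := by
  have h0 : z.natAbs ≠ 0 := by simpa using hz
  set k := z.natAbs.factorization 2 with hk
  have h1 : 2^k * (z.natAbs / 2^k) = z.natAbs := Nat.ordProj_mul_ordCompl_eq_self z.natAbs 2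
  have h2 : ¬ 2 ∣ (z.natAbs / 2^k) := Nat.not_dvd_ordCompl (by norm_num) h0
  have hodd : Odd ((z.natAbs / 2^k : ℕ) : ℤ) := by
    rw [Int.odd_coe_nat, Nat.odd_iff]
    omega
  have hs : z.sign = 1 ∨ z.sign = -1 := by
    rcases lt_or_gt_of_ne hz with h | h
    · exact Or.inr (Int.sign_eq_neg_one_of_neg h)
    · exact Or.inl (Int.sign_eq_one_of_pos h)
  have h1' : (z.natAbs:ℤ) = 2^k * ((z.natAbs/2^k : ℕ):ℤ) := by exact_mod_cast h1.symm
  refine ⟨k, z.sign * (z.natAbs / 2^k : ℕ), ?_, ?_⟩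
  · rcases hs with h | h <;> rw [h]
    · simpa using hodd
    · simpa using hodd.neg
  · calc z = z.sign * (z.natAbs:ℤ) := (Int.sign_mul_natAbs z).symm
      _ = z.sign * (2^k * ((z.natAbs/2^k : ℕ):ℤ)) := by rw [← h1']
      _ = 2^k * (z.sign * ((z.natAbs/2^k : ℕ):ℤ)) := by ring

lemma F_pow_mul (m : ℤ) (hm : Odd m) (k : ℕ) :
    (oddPart (2^k * m) ≡ 1 [ZMOD 4]) ↔ m % 4 = 1 := by
  rw [oddPart_pow_mul m hm k]
  unfold Int.ModEq
  norm_num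

lemma F_zero : ¬ (oddPart 0 ≡ 1 [ZMOD 4]) := by
  unfold oddPart Int.ModEq
  norm_num

lemma F_neg (z : ℤ) (hz : z ≠ 0) :
    (oddPart (-z) ≡ 1 [ZMOD 4]) ↔ ¬ (oddPart z ≡ 1 [ZMOD 4]) := by
  obtain ⟨k, m, hm, rfl⟩ := exists_rep z hz
  have hm2 : m % 2 = 1 := Int.odd_iff.mp hm
  rw [F_pow_mul m hm k, show -(2^k*m) = 2^k * (-m) by ring, F_pow_mul (-m) (by simpa using hm) k]
  omega

lemma F_flip (n : ℕ) (hn : 1 ≤ n) (i : ℤ) (h1 : 1 ≤ i) (h2 : i ≤ 2^n - 1) (h3 : i ≠ 2^(n-1)) :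
    (oddPart (2^n - i) ≡ 1 [ZMOD 4]) ↔ ¬ (oddPart i ≡ 1 [ZMOD 4]) := by
  obtain ⟨k, m, hm, rfl⟩ := exists_rep i (by omega)
  have hm2 : m % 2 = 1 := Int.odd_iff.mp hm
  have hkpos : (0:ℤ) < 2^k := by positivity
  have hmpos : 1 ≤ m := by nlinarith
  have hkn : k < n := by
    by_contra h
    push_neg at h
    have : (2:ℤ)^n ≤ 2^k := pow_le_pow_right₀ (by norm_num) h
    nlinarith
  have hkn2 : k + 2 ≤ n := by
    by_contra h
    push_neg at h
    have hk' : k = n - 1 := by omega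
    subst hk'
    have : m = 1 := by
      by_contra hm1
      have : 3 ≤ m := by omega
      have h2n : (2:ℤ)^n = 2 * 2^(n-1) := by
        rw [← pow_succ']
        congr 1
        omega
      nlinarith
    exact h3 (by rw [this, mul_one])
  have hsplit : (2:ℤ)^n - 2^k * m = 2^k * (2^(n-k) - m) := by
    rw [mul_sub, ← pow_add]
    congr 2
    omega
  have h4 : ∃ c:ℤ, (2:ℤ)^(n-k) = 4 * c := by
    refine ⟨2^(n-k-2), ?_⟩
    rw [show (4:ℤ) = 2^2 by norm_num, ← pow_add]
    congr 1
    omega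
  obtain ⟨c, hc⟩ := h4
  rw [hsplit, F_pow_mul m hm k, F_pow_mul (2^(n-k) - m) (by
    refine Int.odd_iff.mpr ?_
    omega) k]
  omega

lemma F_half (n : ℕ) (hn : 1 ≤ n) : oddPart (2^(n-1)) ≡ 1 [ZMOD 4] := by
  have : (2:ℤ)^(n-1) = 2^(n-1) * 1 := by ring
  rw [this, F_pow_mul 1 (by norm_num) (n-1)]
  decide


noncomputable def outd (n : ℕ) (i : ℤ) : ℕ :=
  ((Finset.Icc (1 : ℤ) (2 ^ n)).filter (fun j => Dominates i j)).card
noncomputable def ind (n : ℕ) (i : ℤ) : ℕ :=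
  ((Finset.Icc (1 : ℤ) (2 ^ n)).filter (fun j => Dominates j i)).card

lemma not_dominates_self (i : ℤ) : ¬ Dominates i i := by
  unfold Dominates; simpa using F_zero

lemma dominates_asymm {i j : ℤ} (h : i ≠ j) : Dominates j i ↔ ¬ Dominates i j := by
  unfold Dominates
  rw [show i - j = -(j - i) by ring]
  exact F_neg _ (sub_ne_zero.mpr (Ne.symm h))

lemma total_deg (n : ℕ) (i : ℤ) (hi : i ∈ Finset.Icc (1:ℤ) (2^n)) :
    outd n i + ind n i = 2^n - 1 := by
  classical
  set s := Finset.Icc (1:ℤ) (2^n) with hs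
  have hdisj : Disjoint (s.filter (fun j => Dominates i j)) (s.filter (fun j => Dominates j i)) := by
    rw [Finset.disjoint_filter]
    intro j hj h1
    have hij : i ≠ j := by rintro rfl; exact not_dominates_self i h1
    exact fun h2 => ((dominates_asymm hij).mp h2) h1
  have hunion : (s.filter (fun j => Dominates i j)) ∪ (s.filter (fun j => Dominates j i)) = s.erase i := by
    ext j
    simp only [Finset.mem_union, Finset.mem_filter, Finset.mem_erase]
    constructor
    · rintro (⟨hm, hd⟩ | ⟨hm, hd⟩)
      · exact ⟨fun h => not_dominates_self i (h ▸ hd), hm⟩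
      · exact ⟨fun h => not_dominates_self i (h ▸ hd), hm⟩
    · rintro ⟨hne, hm⟩
      by_cases hd : Dominates i j
      · exact Or.inl ⟨hm, hd⟩
      · exact Or.inr ⟨hm, (dominates_asymm (Ne.symm hne)).mpr hd⟩
  have hcard : ((s.filter (fun j => Dominates i j)) ∪ (s.filter (fun j => Dominates j i))).card
      = s.card - 1 := by
    rw [hunion, Finset.card_erase_of_mem hi]
  rw [Finset.card_union_of_disjoint hdisj] at hcard
  have hscard : s.card = 2^n := by
    rw [hs, Int.card_Icc]
    norm_num
    rw [show ((2:ℤ)^n) = ((2^n : ℕ) : ℤ) by push_cast; ring, Int.toNat_natCast]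
  rw [outd, ind, ← hs, hcard, hscard]

lemma dominates_shift (i t j : ℤ) : Dominates (i + t) (j + t) ↔ Dominates i j := by
  unfold Dominates
  rw [show j + t - (i + t) = j - i by ring]

lemma card_shift (P : ℤ → Prop) (a b t : ℤ) :
    ((Finset.Icc a b).filter (fun j => P (j - t))).card
      = ((Finset.Icc (a - t) (b - t)).filter (fun j => P j)).card := by
  classical
  apply Finset.card_bij' (fun j _ => j - t) (fun j _ => j + t)
  · intro j hj
    simp only [Finset.mem_filter, Finset.mem_Icc] at *
    constructor
    · omega
    · exact hj.2
  · intro j hj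
    simp only [Finset.mem_filter, Finset.mem_Icc] at *
    refine ⟨by omega, ?_⟩
    simpa using hj.2
  · intro j _; ring
  · intro j _; ring

lemma outd_succ (n : ℕ) (i : ℤ) :
    outd n (i + 1) = ((Finset.Icc (0:ℤ) (2^n - 1)).filter (fun j => Dominates i j)).card := by
  rw [outd]
  have h1 : ∀ j : ℤ, Dominates (i+1) j ↔ Dominates i (j - 1) := by
    intro j
    unfold Dominates
    rw [show j - 1 - i = j - (i+1) by ring]
  simp only [h1]
  rw [card_shift (fun j => Dominates i j) 1 (2^n) 1]
  norm_num

lemma split_left (P : ℤ → Prop) (a b : ℤ) (h : a ≤ b) :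
    ((Finset.Icc a b).filter (fun j => P j)).card
      = (if P a then 1 else 0) + ((Finset.Icc (a+1) b).filter (fun j => P j)).card := by
  classical
  have : Finset.Icc a b = insert a (Finset.Icc (a+1) b) := by
    ext x; simp only [Finset.mem_Icc, Finset.mem_insert]; omega
  rw [this, Finset.filter_insert]
  split_ifs with h1
  · rw [Finset.card_insert_of_notMem (by simp)]
    omega
  · simp

lemma split_right (P : ℤ → Prop) (a b : ℤ) (h : a ≤ b) :
    ((Finset.Icc a b).filter (fun j => P j)).card
      = ((Finset.Icc a (b-1)).filter (fun j => P j)).card + (if P b then 1 else 0) := by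
  classical
  have : Finset.Icc a b = insert b (Finset.Icc a (b-1)) := by
    ext x; simp only [Finset.mem_Icc, Finset.mem_insert]; omega
  rw [this, Finset.filter_insert]
  split_ifs with h1
  · rw [Finset.card_insert_of_notMem (by simp)]
  · simp


lemma step (n : ℕ) (i : ℤ) :
    outd n (i+1) + (if Dominates i (2^n) then 1 else 0)
      = outd n i + (if Dominates i 0 then 1 else 0) := by
  have hpos : (0:ℤ) < 2^n := by positivity
  have e1 : outd n i
      = ((Finset.Icc (1:ℤ) (2^n - 1)).filter (fun j => Dominates i j)).card
        + (if Dominates i (2^n) then 1 else 0) := by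
    rw [outd]
    exact split_right (fun j => Dominates i j) 1 (2^n) (by omega)
  have e2' := split_left (fun j => Dominates i j) 0 (2^n - 1) (by omega)
  rw [show (0:ℤ)+1 = 1 from by norm_num] at e2'
  have e2 : outd n (i+1)
      = (if Dominates i 0 then 1 else 0)
        + ((Finset.Icc (1:ℤ) (2^n - 1)).filter (fun j => Dominates i j)).card := by
    rw [outd_succ]
    exact e2'
  omega

lemma step_eq (n : ℕ) (hn : 1 ≤ n) (i : ℤ) (h1 : 1 ≤ i) (h2 : i ≤ 2^n - 1)
    (h3 : i ≠ 2^(n-1)) : outd n (i+1) = outd n i := by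
  have hs := step n i
  have hd0 : Dominates i 0 ↔ ¬ (oddPart i ≡ 1 [ZMOD 4]) := by
    unfold Dominates
    rw [zero_sub]
    exact F_neg i (by omega)
  have hflip := F_flip n hn i h1 h2 h3
  by_cases hF : oddPart i ≡ 1 [ZMOD 4]
  · have c1 : ¬ Dominates i (2^n) := fun hc => (hflip.mp hc) hF
    have c2 : ¬ Dominates i 0 := fun hc => (hd0.mp hc) hF
    rw [if_neg c1, if_neg c2] at hs
    omega
  · have c1 : Dominates i (2^n) := hflip.mpr hF
    have c2 : Dominates i 0 := hd0.mpr hF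
    rw [if_pos c1, if_pos c2] at hs
    omega

lemma step_half (n : ℕ) (hn : 1 ≤ n) :
    outd n ((2:ℤ)^(n-1)+1) + 1 = outd n ((2:ℤ)^(n-1)) := by
  have h2n : (2:ℤ)^n = 2*2^(n-1) := by
    rw [← pow_succ']
    congr 1
    omega
  have hpos : (0:ℤ) < 2^(n-1) := by positivity
  have hs := step n ((2:ℤ)^(n-1))
  have c1 : Dominates ((2:ℤ)^(n-1)) ((2:ℤ)^n) := by
    show oddPart ((2:ℤ)^n - 2^(n-1)) ≡ 1 [ZMOD 4]
    rw [show (2:ℤ)^n - 2^(n-1) = 2^(n-1) by omega]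
    exact F_half n hn
  have c2 : ¬ Dominates ((2:ℤ)^(n-1)) 0 := by
    intro hc
    have hc' : oddPart (-((2:ℤ)^(n-1))) ≡ 1 [ZMOD 4] := by
      unfold Dominates at hc
      rwa [zero_sub] at hc
    exact (F_neg _ (by omega)).mp hc' (F_half n hn)
  rw [if_pos c1, if_neg c2] at hs
  omega

lemma ind_eq_outd (n : ℕ) (i : ℤ) : ind n i = outd n (2^n + 1 - i) := by
  rw [ind, outd]
  refine Finset.card_bij' (fun j _ => 2^n + 1 - j) (fun j _ => 2^n + 1 - j) ?_ ?_
    (fun j _ => by ring) (fun j _ => by ring)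
  · intro j hj
    beta_reduce
    rw [Finset.mem_filter, Finset.mem_Icc] at hj ⊢
    obtain ⟨⟨ha, hb⟩, hd⟩ := hj
    refine ⟨⟨by omega, by omega⟩, ?_⟩
    unfold Dominates at hd ⊢
    rw [show (2:ℤ)^n + 1 - j - (2^n + 1 - i) = i - j by ring]
    exact hd
  · intro j hj
    beta_reduce
    rw [Finset.mem_filter, Finset.mem_Icc] at hj ⊢
    obtain ⟨⟨ha, hb⟩, hd⟩ := hj
    refine ⟨⟨by omega, by omega⟩, ?_⟩
    unfold Dominates at hd ⊢
    rw [show i - ((2:ℤ)^n + 1 - j) = j - (2^n + 1 - i) by ring]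
    exact hd

lemma const_low (n : ℕ) (hn : 1 ≤ n) :
    ∀ i : ℤ, 1 ≤ i → i ≤ 2^(n-1) → outd n i = outd n 1 := by
  intro i hi
  refine Int.le_induction (motive := fun i _ => i ≤ 2^(n-1) → outd n i = outd n 1)
    (fun _ => rfl) ?_ i hi
  intro i hi IH hle
  have hpos : (0:ℤ) < 2^(n-1) := by positivity
  have h2n : (2:ℤ)^n = 2*2^(n-1) := by
    rw [← pow_succ']
    congr 1
    omega
  rw [step_eq n hn i hi (by omega) (by omega)]
  exact IH (by omega)

lemma const_high (n : ℕ) (hn : 1 ≤ n) :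
    ∀ i : ℤ, 2^(n-1)+1 ≤ i → i ≤ 2^n → outd n i = outd n (2^(n-1)+1) := by
  intro i hi
  refine Int.le_induction (motive := fun i _ => i ≤ 2^n → outd n i = outd n (2^(n-1)+1))
    (fun _ => rfl) ?_ i hi
  intro i hi IH hle
  have hpos : (0:ℤ) < 2^(n-1) := by positivity
  have h2n : (2:ℤ)^n = 2*2^(n-1) := by
    rw [← pow_succ']
    congr 1
    omega
  rw [step_eq n hn i (by omega) (by omega) (by omega)]
  exact IH (by omega)

lemma outd_one (n : ℕ) (hn : 1 ≤ n) : outd n 1 = 2^(n-1) := by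
  have hpos : (0:ℤ) < 2^(n-1) := by positivity
  have h2n : (2:ℤ)^n = 2*2^(n-1) := by
    rw [← pow_succ']
    congr 1
    omega
  have hN : (2:ℕ)^n = 2*2^(n-1) := by
    rw [← pow_succ']
    congr 1
    omega
  have hh : outd n ((2:ℤ)^(n-1)+1) + 1 = outd n 1 := by
    have h := step_half n hn
    rwa [const_low n hn ((2:ℤ)^(n-1)) (by omega) le_rfl] at h
  have hend : outd n ((2:ℤ)^n) = outd n ((2:ℤ)^(n-1)+1) :=
    const_high n hn ((2:ℤ)^n) (by omega) le_rfl
  have hsym : ind n 1 = outd n ((2:ℤ)^n) := by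
    rw [ind_eq_outd]
    norm_num
  have htot : outd n 1 + ind n 1 = 2^n - 1 :=
    total_deg n 1 (by rw [Finset.mem_Icc]; omega)
  omega

theorem stmt_2 (n : ℕ) (hn : 1 ≤ n) :
    (∀ i ∈ Finset.Icc (1 : ℤ) (2 ^ (n - 1)),
      ((Finset.Icc (1 : ℤ) (2 ^ n)).filter (fun j => Dominates i j)).card = 2 ^ (n - 1) ∧
      ((Finset.Icc (1 : ℤ) (2 ^ n)).filter (fun j => Dominates j i)).card = 2 ^ (n - 1) - 1) ∧
    (∀ i ∈ Finset.Icc ((2 : ℤ) ^ (n - 1) + 1) (2 ^ n),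
      ((Finset.Icc (1 : ℤ) (2 ^ n)).filter (fun j => Dominates i j)).card = 2 ^ (n - 1) - 1 ∧
      ((Finset.Icc (1 : ℤ) (2 ^ n)).filter (fun j => Dominates j i)).card = 2 ^ (n - 1)) := by

  have hpos : (0:ℤ) < 2^(n-1) := by positivity
  have h2n : (2:ℤ)^n = 2*2^(n-1) := by
    rw [← pow_succ']
    congr 1
    omega
  have hN : (2:ℕ)^n = 2*2^(n-1) := by
    rw [← pow_succ']
    congr 1
    omega
  have hNpos : 1 ≤ (2:ℕ)^(n-1) := Nat.one_le_two_pow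
  have h1 := outd_one n hn
  have hhigh : outd n ((2:ℤ)^(n-1)+1) + 1 = 2^(n-1) := by
    have h := step_half n hn
    rwa [const_low n hn ((2:ℤ)^(n-1)) (by omega) le_rfl, h1] at h
  constructor
  · intro i hi
    rw [Finset.mem_Icc] at hi
    have ho : outd n i = 2^(n-1) := by rw [const_low n hn i hi.1 hi.2, h1]
    have ht := total_deg n i (by rw [Finset.mem_Icc]; omega)
    refine ⟨ho, ?_⟩
    show ind n i = _
    omega
  · intro i hi
    rw [Finset.mem_Icc] at hi
    have ho : outd n i + 1 = 2^(n-1) := by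
      rw [const_high n hn i hi.1 hi.2]
      exact hhigh
    have ht := total_deg n i (by rw [Finset.mem_Icc]; omega)
    refine ⟨?_, ?_⟩
    · show outd n i = _
      omega
    · show ind n i = _
      omega
end

section
/- For all n ≥ 0, the tournament T_n has only the identity automorphism. -/
/-- The edge relation of the tournament `T n` on vertices `{1, …, 2^n}`
(represented as `Fin (2^n)`, vertex `i` standing for the number `i+1`):
an edge from `i` to `j` iff `odd (j - i) ≡ 1 (mod 4)`. -/
def T (n : ℕ) (i j : Fin (2 ^ n)) : Prop :=
  oddPart (((j : ℕ) : ℤ) - ((i : ℕ) : ℤ)) ≡ 1 [ZMOD 4]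

lemma natAbs_odd_of_odd {m : ℤ} (hm : Odd m) : ¬ 2 ∣ m.natAbs := by
  have := Int.natAbs_odd.mpr hm
  rw [Nat.odd_iff] at this; omega

lemma oddPart_mul_pow (s : ℕ) (m : ℤ) (hm : Odd m) : oddPart (2^s * m) = m := by
  have hm0 : m ≠ 0 := by rintro rfl; simp at hm
  have hnd : ¬ 2 ∣ m.natAbs := natAbs_odd_of_odd hm
  have hfact : ((2^s * m).natAbs.factorization 2) = s := by
    rw [Int.natAbs_mul, Int.natAbs_pow]
    rw [Nat.factorization_mul (by positivity) (Int.natAbs_ne_zero.mpr hm0)]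
    simp [Nat.Prime.factorization_pow Nat.prime_two,
      Nat.factorization_eq_zero_of_not_dvd hnd]
  rw [oddPart, hfact]
  exact Int.mul_ediv_cancel_left m (by positivity)

lemma exists_decomp (z : ℤ) (hz : z ≠ 0) : ∃ s m, Odd m ∧ z = 2^s * m := by
  have hn : z.natAbs ≠ 0 := Int.natAbs_ne_zero.mpr hz
  set s := z.natAbs.factorization 2 with hs
  set t := z.natAbs / 2 ^ s with ht
  have h1 : 2 ^ s * t = z.natAbs := Nat.ordProj_mul_ordCompl_eq_self z.natAbs 2
  have h2 : ¬ 2 ∣ t := Nat.not_dvd_ordCompl Nat.prime_two hn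
  have h2' : Odd (t : ℤ) := by rw [Int.odd_iff]; omega
  rcases Int.natAbs_eq z with h | h
  · exact ⟨s, t, h2', by rw [h, ← h1]; push_cast; ring⟩
  · exact ⟨s, -t, h2'.neg, by rw [h, ← h1]; push_cast; ring⟩

lemma oddPart_odd {z : ℤ} (hz : z ≠ 0) : Odd (oddPart z) := by
  obtain ⟨s, m, hm, rfl⟩ := exists_decomp z hz
  rwa [oddPart_mul_pow s m hm]

lemma oddPart_neg (z : ℤ) : oddPart (-z) = - oddPart z := by
  rcases eq_or_ne z 0 with rfl | hz
  · simp [oddPart]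
  obtain ⟨s, m, hm, rfl⟩ := exists_decomp z hz
  rw [oddPart_mul_pow s m hm, show -(2^s*m) = 2^s * (-m) by ring,
    oddPart_mul_pow s (-m) hm.neg]

lemma oddPart_two_pow (k : ℕ) : oddPart (2^k) = 1 := by
  simpa using oddPart_mul_pow k 1 (by norm_num)

lemma keyN2 {n : ℕ} {d : ℤ} (h1 : 0 < d) (h2 : d < 2^n) (h3 : d ≠ 2^(n-1)) :
    oddPart (2^n - d) ≡ -oddPart d [ZMOD 4] := by
  have hn2 : 2 ≤ n := by
    by_contra h
    interval_cases n <;> norm_num at h2 h3 <;> omega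
  obtain ⟨s, m, hm, rfl⟩ := exists_decomp d h1.ne'
  have hm1 : (1:ℤ) ≤ m := by
    rcases hm with ⟨k, rfl⟩
    nlinarith [pow_pos (show (0:ℤ) < 2 by norm_num) s]
  have hsn : (2:ℤ) ^ s < 2 ^ n := lt_of_le_of_lt (le_mul_of_one_le_right (by positivity) hm1) h2
  have hs : s < n := by
    by_contra h
    exact absurd (pow_le_pow_right₀ (by norm_num) (not_lt.mp h)) (not_le.mpr hsn)
  have hs2 : s ≤ n - 2 := by
    by_contra h
    have hseq : s = n - 1 := by omega
    subst hseq
    have hn1 : n - 1 + 1 = n := by omega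
    have : m < 2 := by
      by_contra hm2
      have : (2:ℤ)^(n-1) * 2 ≤ 2^(n-1) * m := by
        apply mul_le_mul_of_nonneg_left (by omega) (by positivity)
      rw [← pow_succ, hn1] at this
      omega
    interval_cases m
    · exact h3 (by ring)
  have hdecomp : (2:ℤ)^n - 2^s*m = 2^s * (2^(n-s) - m) := by
    have hsn' : s + (n - s) = n := by omega
    rw [mul_sub, ← pow_add, hsn']
  have hodd : Odd ((2:ℤ)^(n-s) - m) := by
    have : (2:ℤ) ∣ 2^(n-s) := dvd_pow_self 2 (by omega)
    rcases hm with ⟨k, rfl⟩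
    rcases this with ⟨c, hc⟩
    exact ⟨c - k - 1, by omega⟩
  rw [hdecomp, oddPart_mul_pow s _ hodd, oddPart_mul_pow s m hm]
  have h4 : (4:ℤ) ∣ 2^(n-s) := by
    have : (2:ℤ)^2 ∣ 2^(n-s) := pow_dvd_pow 2 (by omega)
    norm_num at this
    exact this
  unfold Int.ModEq
  omega

lemma key {n : ℕ} {x y : ℤ} (hd : ((2:ℤ)^n) ∣ x + y) (hx : x ≠ 0)
    (hx2 : |x| < 2^n) (hy : y ≠ 0) (hy2 : |y| < 2^n) (hmid : |x| ≠ 2^(n-1)) :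
    oddPart y ≡ -oddPart x [ZMOD 4] := by
  have hxy : x + y = 0 ∨ x + y = 2^n ∨ x + y = -2^n := by
    rcases hd with ⟨c, hc⟩
    have hc2 : c = 0 ∨ c = 1 ∨ c = -1 := by
      by_contra h
      push_neg at h
      obtain ⟨h0, h1, h2⟩ := h
      have hp : (0:ℤ) < 2^n := by positivity
      rcases lt_or_gt_of_ne h0 with hl | hg
      · have : c ≤ -2 := by omega
        nlinarith [abs_lt.mp hx2, abs_lt.mp hy2]
      · have : 2 ≤ c := by omega
        nlinarith [abs_lt.mp hx2, abs_lt.mp hy2]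
    rcases hc2 with rfl | rfl | rfl <;> simp [hc] <;> omega
  rcases hxy with h | h | h
  · have : y = -x := by omega
    rw [this, oddPart_neg]
  · have hx0 : 0 < x := by
      rcases abs_lt.mp hy2 with ⟨hy1, _⟩; omega
    have hx1 : x < 2^n := by rcases abs_lt.mp hx2 with ⟨_, h'⟩; omega
    have : y = 2^n - x := by omega
    rw [this]
    exact keyN2 hx0 hx1 (by rw [abs_of_pos hx0] at hmid; exact hmid)
  · have hx0 : x < 0 := by rcases abs_lt.mp hy2 with ⟨_, hy1⟩; omega
    have h1 : 0 < -x := by omega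
    have h2 : -x < 2^n := by rcases abs_lt.mp hx2 with ⟨h', _⟩; omega
    have h3 : -x ≠ 2^(n-1) := by rw [abs_of_neg hx0] at hmid; exact hmid
    have hyx : -y = 2^n - (-x) := by omega
    have := keyN2 h1 h2 h3
    rw [← hyx, oddPart_neg, oddPart_neg] at this
    have := this.neg
    simpa using this

lemma class_neg {z : ℤ} (hz : z ≠ 0) :
    (oddPart (-z) ≡ 1 [ZMOD 4]) ↔ ¬ (oddPart z ≡ 1 [ZMOD 4]) := by
  obtain ⟨k, hk⟩ := oddPart_odd hz
  rw [oddPart_neg]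
  unfold Int.ModEq
  omega

lemma T_irrefl (n : ℕ) (i : Fin (2^n)) : ¬ T n i i := by
  unfold T Int.ModEq
  simp [oddPart]

lemma T_asymm (n : ℕ) {i j : Fin (2^n)} (h : j ≠ i) : T n i j ↔ ¬ T n j i := by
  have hval : (j:ℕ) ≠ (i:ℕ) := fun h' => h (Fin.ext h')
  have hz : ((j:ℕ):ℤ) - ((i:ℕ):ℤ) ≠ 0 := by omega
  unfold T
  rw [show ((i:ℕ):ℤ) - ((j:ℕ):ℤ) = -(((j:ℕ):ℤ) - ((i:ℕ):ℤ)) by ring, class_neg hz]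
  tauto

open Finset in
open scoped Classical in
noncomputable def deg (n : ℕ) (i : Fin (2^n)) : ℕ :=
  (Finset.univ.filter (fun j => T n i j)).card

open Finset in
open scoped Classical in
lemma deg_apply_equiv (n : ℕ) (f : Fin (2^n) ≃ Fin (2^n))
    (hf : ∀ u v, T n u v ↔ T n (f u) (f v)) (i : Fin (2^n)) :
    deg n (f i) = deg n i := by
  unfold deg
  apply Finset.card_bij' (fun j _ => f.symm j) (fun j _ => f j)
  · intro a ha
    simp only [mem_filter, mem_univ, true_and] at ha ⊢
    rw [hf]
    simpa using ha
  · intro a ha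
    simp only [mem_filter, mem_univ, true_and] at ha ⊢
    rw [← hf]
    exact ha
  · intro a _; simp
  · intro a _; simp

open Finset in
open scoped Classical in
lemma deg_eq (n : ℕ) (i : Fin (2^(n+1))) :
    deg (n+1) i = if (i:ℕ) < 2^n then 2^n else 2^n - 1 := by
  have hNH : 2^(n+1) = 2*2^n := by ring
  have hH0 : 0 < 2^n := Nat.pow_pos (by norm_num)
  have hN0 : 0 < 2^(n+1) := by omega
  -- the antipodal vertex
  set p : Fin (2^(n+1)) := ⟨((i:ℕ) + 2^n) % 2^(n+1), Nat.mod_lt _ hN0⟩ with hp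
  have hpv : (p:ℕ) = ((i:ℕ) + 2^n) % 2^(n+1) := rfl
  have hpval : ((i:ℕ) < 2^n ∧ (p:ℕ) = (i:ℕ) + 2^n) ∨ (2^n ≤ (i:ℕ) ∧ (p:ℕ) + 2^n = (i:ℕ)) := by
    rcases lt_or_ge (i:ℕ) (2^n) with h | h
    · left
      refine ⟨h, ?_⟩
      show ((i:ℕ) + 2^n) % 2^(n+1) = (i:ℕ) + 2^n
      exact Nat.mod_eq_of_lt (by omega)
    · right
      refine ⟨h, ?_⟩
      show ((i:ℕ) + 2^n) % 2^(n+1) + 2^n = (i:ℕ)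
      rw [Nat.mod_eq_sub_mod (by omega), Nat.mod_eq_of_lt (by omega)]
      omega
  -- the reflection map
  set φ : Fin (2^(n+1)) → Fin (2^(n+1)) :=
    fun j => ⟨(2*(i:ℕ) + 2^(n+1) - (j:ℕ)) % 2^(n+1), Nat.mod_lt _ hN0⟩ with hφ
  have hphi : ∀ j : Fin (2^(n+1)),
      ((φ j : Fin (2^(n+1))):ℕ) = 2*(i:ℕ) + 2^(n+1) - (j:ℕ) ∨
      ((φ j):ℕ) + 2^(n+1) = 2*(i:ℕ) + 2^(n+1) - (j:ℕ) ∨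
      ((φ j):ℕ) + 2*2^(n+1) = 2*(i:ℕ) + 2^(n+1) - (j:ℕ) := by
    intro j
    have hjle : (j:ℕ) ≤ 2*(i:ℕ) + 2^(n+1) := by omega
    have hlt3 : 2*(i:ℕ) + 2^(n+1) - (j:ℕ) < 3 * 2^(n+1) := by omega
    show (2*(i:ℕ) + 2^(n+1) - (j:ℕ)) % 2^(n+1) = _ ∨
      (2*(i:ℕ) + 2^(n+1) - (j:ℕ)) % 2^(n+1) + 2^(n+1) = _ ∨
      (2*(i:ℕ) + 2^(n+1) - (j:ℕ)) % 2^(n+1) + 2*2^(n+1) = _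
    set a := 2*(i:ℕ) + 2^(n+1) - (j:ℕ) with ha
    rcases lt_or_ge a (2^(n+1)) with h1 | h1
    · left; exact Nat.mod_eq_of_lt h1
    rcases lt_or_ge a (2*2^(n+1)) with h2 | h2
    · right; left
      rw [Nat.mod_eq_sub_mod h1, Nat.mod_eq_of_lt (by omega)]
      omega
    · right; right
      rw [Nat.mod_eq_sub_mod h1, Nat.mod_eq_sub_mod (by omega), Nat.mod_eq_of_lt (by omega)]
      omega
  -- master lemma
  have hmaster : ∀ j : Fin (2^(n+1)), j ≠ i → j ≠ p →
      (T (n+1) i j ↔ T (n+1) (φ j) i) ∧ φ j ≠ i ∧ φ j ≠ p := by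
    intro j hj hjp
    have hjv : (j:ℕ) ≠ (i:ℕ) := fun h => hj (Fin.ext h)
    have hjpv : (j:ℕ) ≠ (p:ℕ) := fun h => hjp (Fin.ext h)
    have hjlt := j.isLt
    have hilt := i.isLt
    have hplt := p.isLt
    have hφlt := (φ j).isLt
    have hphij := hphi j
    set x : ℤ := ((j:ℕ):ℤ) - ((i:ℕ):ℤ) with hx
    set y : ℤ := (((φ j):ℕ):ℤ) - ((i:ℕ):ℤ) with hy
    have hcast : ((2^(n+1) : ℕ) : ℤ) = (2:ℤ)^(n+1) := by push_cast; ring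
    have hd : ((2:ℤ)^(n+1)) ∣ x + y := by
      rcases hphij with h | h | h
      · exact ⟨1, by omega⟩
      · exact ⟨0, by omega⟩
      · exact ⟨-1, by omega⟩
    have hx0 : x ≠ 0 := by omega
    have hx2 : |x| < 2^(n+1) := by
      rw [abs_lt]; constructor <;> omega
    have hy0 : y ≠ 0 := by
      rcases hphij with h | h | h <;> omega
    have hy2 : |y| < 2^(n+1) := by
      rw [abs_lt]; constructor <;> omega
    have hmid : |x| ≠ 2^(n+1-1) := by
      have hcast2 : ((2^n : ℕ) : ℤ) = (2:ℤ)^(n+1-1) := by norm_num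
      intro h
      rcases (abs_eq (by positivity)).mp h with h | h <;>
        rw [← hcast2] at h <;> rcases hpval with ⟨h1, h2⟩ | ⟨h1, h2⟩ <;> omega
    have hkey := key hd hx0 hx2 hy0 hy2 hmid
    obtain ⟨k, hk⟩ := oddPart_odd hx0
    obtain ⟨l, hl⟩ := oddPart_odd hy0
    refine ⟨?_, ?_, ?_⟩
    · show (oddPart x ≡ 1 [ZMOD 4]) ↔ (oddPart (((i:ℕ):ℤ) - (((φ j):ℕ):ℤ)) ≡ 1 [ZMOD 4])
      rw [show ((i:ℕ):ℤ) - (((φ j):ℕ):ℤ) = -y by omega, oddPart_neg]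
      unfold Int.ModEq at hkey ⊢
      omega
    · intro h
      rw [h] at hy
      omega
    · intro h
      have : ((φ j):ℕ) = (p:ℕ) := by rw [h]
      rcases hphij with h' | h' | h' <;> rcases hpval with ⟨h1, h2⟩ | ⟨h1, h2⟩ <;> omega
  have hinv : ∀ j : Fin (2^(n+1)), φ (φ j) = j := by
    intro j
    have h1 := hphi j
    have h2 := hphi (φ j)
    have := j.isLt
    have := i.isLt
    have := (φ j).isLt
    have := (φ (φ j)).isLt
    exact Fin.ext (by omega)
  have hpi : p ≠ i := by
    intro h
    have : (p:ℕ) = (i:ℕ) := by rw [h]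
    rcases hpval with ⟨h1, h2⟩ | ⟨h1, h2⟩ <;> omega
  have hTip : T (n+1) i p ↔ (i:ℕ) < 2^n := by
    constructor
    · intro h
      by_contra hlt
      rcases hpval with ⟨h1, h2⟩ | ⟨h1, h2⟩
      · exact hlt h1
      · have hc2 : ((2^n : ℕ) : ℤ) = (2:ℤ)^n := by push_cast; ring
        have hdiff : ((p:ℕ):ℤ) - ((i:ℕ):ℤ) = -(2^n) := by omega
        unfold T at h
        rw [hdiff, oddPart_neg, oddPart_two_pow] at h
        unfold Int.ModEq at h; omega
    · intro h1
      have h2 : (p:ℕ) = (i:ℕ) + 2^n := by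
        rcases hpval with ⟨_, h2⟩ | ⟨h2, _⟩
        · exact h2
        · omega
      unfold T
      have hc2 : ((2^n : ℕ) : ℤ) = (2:ℤ)^n := by push_cast; ring
      rw [show ((p:ℕ):ℤ) - ((i:ℕ):ℤ) = 2^n by omega, oddPart_two_pow]
  unfold deg
  set O := Finset.univ.filter (fun j => T (n+1) i j) with hO
  set I := Finset.univ.filter (fun j => T (n+1) j i) with hI
  have hiO : i ∉ O := by simp [hO, T_irrefl]
  have hIO : I = Finset.univ \ insert i O := by
    ext j
    simp only [hI, hO, mem_filter, mem_univ, true_and, mem_sdiff, mem_insert, not_or]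
    constructor
    · intro h
      have hji : j ≠ i := by rintro rfl; exact T_irrefl _ _ h
      exact ⟨hji, fun h' => ((T_asymm _ hji).mp h') h⟩
    · rintro ⟨hji, hT⟩
      by_contra h
      exact hT ((T_asymm _ hji).mpr h)
  have hcardI : I.card = 2^(n+1) - 1 - O.card := by
    rw [hIO, card_sdiff_of_subset (subset_univ _), card_insert_of_notMem hiO, card_univ,
      Fintype.card_fin]
    omega
  have hbij : (O.erase p).card = (I.erase p).card := by
    apply card_bij' (fun j _ => φ j) (fun j _ => φ j)
    · intro a ha
      rw [mem_erase] at ha ⊢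
      obtain ⟨hap, haO⟩ := ha
      rw [hO, mem_filter] at haO
      have hai : a ≠ i := by rintro rfl; exact T_irrefl _ _ haO.2
      obtain ⟨hiff, hφi, hφp⟩ := hmaster a hai hap
      exact ⟨hφp, by rw [hI, mem_filter]; exact ⟨mem_univ _, hiff.mp haO.2⟩⟩
    · intro a ha
      rw [mem_erase] at ha ⊢
      obtain ⟨hap, haI⟩ := ha
      rw [hI, mem_filter] at haI
      have hai : a ≠ i := by rintro rfl; exact T_irrefl _ _ haI.2
      obtain ⟨hiff, hφi, hφp⟩ := hmaster a hai hap
      have hnT : ¬ T (n+1) i a := fun h => (T_asymm _ hai).mp h haI.2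
      have : ¬ T (n+1) (φ a) i := fun h => hnT (hiff.mpr h)
      refine ⟨hφp, ?_⟩
      rw [hO, mem_filter]
      exact ⟨mem_univ _, (T_asymm _ hφi).mpr this⟩
    · intro a _; exact hinv a
    · intro a _; exact hinv a
  rcases lt_or_ge (i:ℕ) (2^n) with h | h
  · rw [if_pos h]
    have hpO : p ∈ O := by rw [hO, mem_filter]; exact ⟨mem_univ _, hTip.mpr h⟩
    have hpI : p ∉ I := by
      rw [hI, mem_filter]
      rintro ⟨-, hT⟩
      exact (T_asymm _ hpi).mp (hTip.mpr h) hT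
    rw [card_erase_of_mem hpO, erase_eq_of_notMem hpI] at hbij
    have hO1 : 1 ≤ O.card := card_pos.mpr ⟨p, hpO⟩
    omega
  · rw [if_neg (by omega)]
    have hpO : p ∉ O := by
      rw [hO, mem_filter]
      rintro ⟨-, hT⟩
      exact (by omega : ¬ (i:ℕ) < 2^n) (hTip.mp hT)
    have hTpi : T (n+1) p i := by
      by_contra hc
      exact (by omega : ¬ (i:ℕ) < 2^n) (hTip.mp ((T_asymm _ hpi).mpr hc))
    have hpI : p ∈ I := by rw [hI, mem_filter]; exact ⟨mem_univ _, hTpi⟩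
    rw [card_erase_of_mem hpI, erase_eq_of_notMem hpO] at hbij
    have hI1 : 1 ≤ I.card := card_pos.mpr ⟨p, hpI⟩
    omega

/-- The tournament `T n` has only the identity automorphism. -/
theorem stmt_11 (n : ℕ) (f : Fin (2 ^ n) ≃ Fin (2 ^ n))
    (hf : ∀ u v : Fin (2 ^ n), T n u v ↔ T n (f u) (f v)) :
    f = Equiv.refl (Fin (2 ^ n)) := by
  induction n with
  | zero =>
    ext j
    have h1 := (f j).isLt
    have h2 := j.isLt
    norm_num at h1 h2
    exact congrArg Fin.val (by omega : f j = j) ▸ (by omega)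
  | succ n ih =>
    have hNH : 2^(n+1) = 2*2^n := by ring
    have hH0 : 0 < 2^n := Nat.pow_pos (by norm_num)
    have hhalf : ∀ i : Fin (2^(n+1)), ((i:ℕ) < 2^n ↔ ((f i):ℕ) < 2^n) := by
      intro i
      have h2 := deg_eq n (f i)
      rw [deg_apply_equiv (n+1) f hf i, deg_eq n i] at h2
      by_cases h : (i:ℕ) < 2^n <;> by_cases h' : ((f i):ℕ) < 2^n <;>
        simp [h, h'] at h2 ⊢ <;> omega
    have emb1lt : ∀ k : Fin (2^n), (k:ℕ) < 2^(n+1) := fun k => by have := k.isLt; omega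
    -- first half map
    set g0 : Fin (2^n) → Fin (2^n) :=
      fun k => ⟨((f ⟨(k:ℕ), emb1lt k⟩):ℕ),
        (hhalf ⟨(k:ℕ), emb1lt k⟩).mp k.isLt⟩ with hg0
    have hg0v : ∀ a : Fin (2^n), ((g0 a):ℕ) = ((f ⟨(a:ℕ), emb1lt a⟩):ℕ) := fun a => rfl
    have hg0inj : Function.Injective g0 := by
      intro a b hab
      have hv : ((f ⟨(a:ℕ), emb1lt a⟩):ℕ) = ((f ⟨(b:ℕ), emb1lt b⟩):ℕ) := by
        rw [← hg0v, ← hg0v, hab]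
      have h1 : (⟨(a:ℕ), emb1lt a⟩ : Fin (2^(n+1))) = ⟨(b:ℕ), emb1lt b⟩ :=
        f.injective (Fin.ext hv)
      have h2 : (a:ℕ) = (b:ℕ) := by simpa using h1
      exact Fin.ext h2
    set g : Fin (2^n) ≃ Fin (2^n) :=
      Equiv.ofBijective g0 (Finite.injective_iff_bijective.mp hg0inj) with hgdef
    have hg : ∀ u v : Fin (2^n), T n u v ↔ T n (g u) (g v) := by
      intro u v
      exact hf ⟨(u:ℕ), emb1lt u⟩ ⟨(v:ℕ), emb1lt v⟩
    have hgid := ih g hg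
    have hfirst : ∀ k : Fin (2^n), ((f ⟨(k:ℕ), emb1lt k⟩):ℕ) = (k:ℕ) := by
      intro k
      have : g k = k := by rw [hgid]; rfl
      exact congrArg Fin.val this
    -- second half map
    set emb2 : Fin (2^n) → Fin (2^(n+1)) :=
      fun k => ⟨(k:ℕ) + 2^n, by have := k.isLt; omega⟩ with hemb2
    have hemb2v : ∀ k : Fin (2^n), ((emb2 k : Fin (2^(n+1))):ℕ) = (k:ℕ) + 2^n :=
      fun k => rfl
    have h0 : ∀ k : Fin (2^n), 2^n ≤ ((f (emb2 k)):ℕ) := by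
      intro k
      have h1 := hhalf (emb2 k)
      have h2 := hemb2v k
      omega
    set h : Fin (2^n) → Fin (2^n) :=
      fun k => ⟨((f (emb2 k)):ℕ) - 2^n, by have := (f (emb2 k)).isLt; omega⟩ with hhdef
    have hhv : ∀ a : Fin (2^n), ((h a):ℕ) = ((f (emb2 a)):ℕ) - 2^n := fun a => rfl
    have hhinj : Function.Injective h := by
      intro a b hab
      have hv : ((f (emb2 a)):ℕ) = ((f (emb2 b)):ℕ) := by
        have h1 : ((h a):ℕ) = ((h b):ℕ) := by rw [hab]
        have ha := h0 a; have hb := h0 b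
        have e1 := hhv a; have e2 := hhv b
        omega
      have h1 := f.injective (Fin.ext hv)
      have h2 : ((emb2 a : Fin (2^(n+1))):ℕ) = ((emb2 b : Fin (2^(n+1))):ℕ) := by rw [h1]
      have e1 := hemb2v a; have e2 := hemb2v b
      refine Fin.ext ?_
      omega
    set h' : Fin (2^n) ≃ Fin (2^n) :=
      Equiv.ofBijective h (Finite.injective_iff_bijective.mp hhinj) with hh'def
    have hh : ∀ u v : Fin (2^n), T n u v ↔ T n (h' u) (h' v) := by
      intro u v
      have h1 := hf (emb2 u) (emb2 v)
      unfold T at h1 ⊢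
      have e1 := hemb2v v
      have e2 := hemb2v u
      have e3 : ((h' v):ℕ) = ((f (emb2 v)):ℕ) - 2^n := hhv v
      have e4 : ((h' u):ℕ) = ((f (emb2 u)):ℕ) - 2^n := hhv u
      have hv := h0 v; have hu := h0 u
      have r1 : ((emb2 v : Fin (2^(n+1))):ℕ) - ((emb2 u : Fin (2^(n+1))):ℕ)
          = ((v:ℕ):ℤ) - ((u:ℕ):ℤ) := by rw [e1, e2]; push_cast; ring
      have r2 : ((f (emb2 v) : Fin (2^(n+1))):ℕ) - (((f (emb2 u)):Fin (2^(n+1))):ℕ)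
          = (((h' v):ℕ):ℤ) - (((h' u):ℕ):ℤ) := by rw [e3, e4]; omega
      rw [r1, r2] at h1
      exact h1
    have hhid := ih h' hh
    have hsecond : ∀ k : Fin (2^n), ((f (emb2 k)):ℕ) = (k:ℕ) + 2^n := by
      intro k
      have h1 : h' k = k := by rw [hhid]; rfl
      have h2 : ((h k):ℕ) = (k:ℕ) := congrArg Fin.val h1
      have h3 := hhv k
      have h4 := h0 k
      omega
    ext i
    rcases lt_or_ge (i:ℕ) (2^n) with hlt | hge
    · have hik : (⟨((⟨(i:ℕ), hlt⟩ : Fin (2^n)):ℕ), emb1lt ⟨(i:ℕ), hlt⟩⟩ : Fin (2^(n+1))) = i :=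
        Fin.ext rfl
      have := hfirst ⟨(i:ℕ), hlt⟩
      rw [hik] at this
      exact this
    · set k : Fin (2^n) := ⟨(i:ℕ) - 2^n, by have := i.isLt; omega⟩ with hk
      have ek : (k:ℕ) = (i:ℕ) - 2^n := rfl
      have hik : emb2 k = i := by
        have e1 := hemb2v k
        have e2 := i.isLt
        refine Fin.ext ?_
        omega
      have h1 := hsecond k
      rw [hik] at h1
      simp only [Equiv.refl_apply]
      omega
end
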